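/- (Claim 5, first part) Let k ≥ 2, n ≥ 2 be integers and let A ⊆ [k]^n be a nonempty compressed set. Let p be the minimal index for which A ∩ B_p ≠ ∅. Then d(B_{≥p+1}) ⊆ d(A). -/
import Mathlib


open Finset
open scoped Classical

/-- `R_i(x)`: the set of coordinates of `x` equal to `i`.
The ambient alphabet is `[k+1] = {0,…,k}`. -/
noncomputable def rset {k N : ℕ} (x : Fin N → Fin (k + 1)) (i : ℕ) : Finset (Fin N) :=
  Finset.univ.filter fun j => (x j : ℕ) = i

/-- the strict binary order on finite sets of coordinates:
`X <_bin Y` iff `X ≠ Y` and `max (X Δ Y) ∈ Y`. -/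
def binLT {N : ℕ} (X Y : Finset (Fin N)) : Prop :=
  ∃ m ∈ Y, m ∉ X ∧ ∀ j : Fin N, ((j ∈ X ∧ j ∉ Y) ∨ (j ∈ Y ∧ j ∉ X)) → j ≤ m

/-- the strict `≤`-order on `[k+1]^N`: `x < y` iff `|R_0(x)| > |R_0(y)|`, or
`|R_0(x)| = |R_0(y)|` and for the largest `i` with `R_i(x) ≠ R_i(y)` we have
`max (R_i(x) Δ R_i(y)) ∈ R_i(y)`. -/
def plt {k N : ℕ} (x y : Fin N → Fin (k + 1)) : Prop :=
  (rset y 0).card < (rset x 0).card ∨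
    ((rset x 0).card = (rset y 0).card ∧
      ∃ i : ℕ, binLT (rset x i) (rset y i) ∧ ∀ j : ℕ, i < j → rset x j = rset y j)

/-- the `≤`-order on `[k+1]^N`. -/
def ple {k N : ℕ} (x y : Fin N → Fin (k + 1)) : Prop := x = y ∨ plt x y

/-- `B` is an initial segment of the `≤`-order. -/
def isInitSeg {k N : ℕ} (B : Finset (Fin N → Fin (k + 1))) : Prop :=
  ∀ y ∈ B, ∀ x, ple x y → x ∈ B

/-- the `d`-shadow: all points obtained from a point of `A` by flipping one
nonzero coordinate to `0`. -/
noncomputable def dShadow {k N : ℕ} (A : Finset (Fin N → Fin (k + 1))) :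
    Finset (Fin N → Fin (k + 1)) :=
  A.biUnion fun x =>
    (Finset.univ.filter fun i => x i ≠ 0).image fun i => Function.update x i 0

/-- the initial segment of the `≤`-order on `[k+1]^N` of cardinality `m`. -/
noncomputable def initSeg (k N m : ℕ) : Finset (Fin N → Fin (k + 1)) :=
  Finset.univ.filter fun x => (Finset.univ.filter fun y => ple y x).card ≤ m

/-- the `C_s`-compression of `A ⊆ [k+1]^(n+1)`: replace each slice
`A_{s,t} = {y : t_s y ∈ A}` by the initial segment of the same size. -/
noncomputable def compress {k n : ℕ} (s : Fin (n + 1)) (A : Finset (Fin (n + 1) → Fin (k + 1))) :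
    Finset (Fin (n + 1) → Fin (k + 1)) :=
  Finset.univ.biUnion fun t : Fin (k + 1) =>
    (initSeg k n
        (Finset.univ.filter fun y : Fin n → Fin (k + 1) => s.insertNth t y ∈ A).card).image
      fun y => s.insertNth t y

/-- `A` is compressed if every `C_s`-compression fixes it. -/
def IsCompressed {k n : ℕ} (A : Finset (Fin (n + 1) → Fin (k + 1))) : Prop :=
  ∀ s : Fin (n + 1), compress s A = A

/-- `B_r`: points with exactly `r` zero coordinates. -/
noncomputable def Bexact (k N r : ℕ) : Finset (Fin N → Fin (k + 1)) :=
  Finset.univ.filter fun x => (rset x 0).card = r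

/-- `B_{≥r}`: points with at least `r` zero coordinates. -/
noncomputable def Bge (k N r : ℕ) : Finset (Fin N → Fin (k + 1)) :=
  Finset.univ.filter fun x => r ≤ (rset x 0).card

/-- `m(x)`: the largest coordinate value of `x`. -/
noncomputable def mval {k N : ℕ} (x : Fin N → Fin (k + 1)) : ℕ :=
  Finset.univ.sup fun i => (x i : ℕ)

/-- the class `C_X`: points with maximal coordinate `s`, attained exactly on `X`,
and exactly `r` zero coordinates. -/
noncomputable def classSet (k N s r : ℕ) (X : Finset (Fin N)) : Finset (Fin N → Fin (k + 1)) :=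
  Finset.univ.filter fun x => mval x = s ∧ rset x s = X ∧ (rset x 0).card = r

/-- `[m]^N = {0,…,m−1}^N`. -/
noncomputable def box (k N m : ℕ) : Finset (Fin N → Fin (k + 1)) :=
  Finset.univ.filter fun x => ∀ i, (x i : ℕ) < m

/-- `{1,…,s−1}^N`. -/
noncomputable def box1 (k N s : ℕ) : Finset (Fin N → Fin (k + 1)) :=
  Finset.univ.filter fun x => ∀ i, 1 ≤ (x i : ℕ) ∧ (x i : ℕ) ≤ s - 1

/-- `B` is a down-set. -/
def isDownSet {k N : ℕ} (B : Finset (Fin N → Fin (k + 1))) : Prop :=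
  ∀ y ∈ B, ∀ x : Fin N → Fin (k + 1), (∀ j, (x j : ℕ) ≤ (y j : ℕ)) → x ∈ B


lemma val1 {k : ℕ} (hk : 1 ≤ k) : ((1 : Fin (k + 1)) : ℕ) = 1 := by
  rw [Fin.val_one']; exact Nat.mod_eq_of_lt (by omega)

lemma succAbove_val {N : ℕ} (i : Fin (N + 1)) (j : Fin N) :
    ((i.succAbove j : Fin (N + 1)) : ℕ) = if (j : ℕ) < (i : ℕ) then (j : ℕ) else (j : ℕ) + 1 := by
  rw [Fin.succAbove]
  rcases lt_or_ge ((j : ℕ)) ((i : ℕ)) with h | h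
  · rw [if_pos (by simpa [Fin.lt_def] using h), if_pos h]; rfl
  · rw [if_neg (by simpa [Fin.lt_def, Nat.not_lt] using h), if_neg (by omega)]; rfl

lemma cardLt (N a : ℕ) (h : a ≤ N) :
    ((Finset.univ : Finset (Fin N)).filter fun j : Fin N => (j : ℕ) < a).card = a := by
  have he : ((Finset.univ : Finset (Fin N)).filter fun j : Fin N => (j : ℕ) < a)
      = (Finset.range a).attachFin (fun m hm => lt_of_lt_of_le (Finset.mem_range.mp hm) h) := by
    ext j
    rw [Finset.mem_attachFin]
    simp
  rw [he, Finset.card_attachFin, Finset.card_range]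

lemma cardGe (N a : ℕ) (h : a ≤ N) :
    ((Finset.univ : Finset (Fin N)).filter fun j : Fin N => a ≤ (j : ℕ)).card = N - a := by
  have h1 := Finset.card_filter_add_card_filter_not
    (s := (Finset.univ : Finset (Fin N))) (p := fun j : Fin N => (j : ℕ) < a)
  simp only [Finset.card_univ, Fintype.card_fin] at h1
  have h2 : ((Finset.univ : Finset (Fin N)).filter fun j : Fin N => ¬ (j : ℕ) < a)
      = ((Finset.univ : Finset (Fin N)).filter fun j : Fin N => a ≤ (j : ℕ)) := by
    apply Finset.filter_congr; intro x _; simp [Nat.not_lt]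
  rw [cardLt N a h, h2] at h1
  omega

noncomputable def wstar (k N q : ℕ) : Fin N → Fin (k + 1) :=
  fun i => if (i : ℕ) < N - q then 1 else 0

lemma mem_rset {k N : ℕ} {x : Fin N → Fin (k + 1)} {i : ℕ} {j : Fin N} :
    j ∈ rset x i ↔ (x j : ℕ) = i := by simp [rset]

lemma rset_wstar_zero {k N q : ℕ} (hk : 1 ≤ k) :
    rset (wstar k N q) 0 = Finset.univ.filter fun j : Fin N => N - q ≤ (j : ℕ) := by
  ext j; simp only [mem_rset, Finset.mem_filter, Finset.mem_univ, true_and, wstar]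
  split_ifs with h
  · simp [val1 hk]; omega
  · simp; omega

lemma rset_wstar_one {k N q : ℕ} (hk : 1 ≤ k) :
    rset (wstar k N q) 1 = Finset.univ.filter fun j : Fin N => (j : ℕ) < N - q := by
  ext j; simp only [mem_rset, Finset.mem_filter, Finset.mem_univ, true_and, wstar]
  split_ifs with h
  · simp only [val1 hk]
    simp [h]
  · simp [h]

lemma rset_wstar_ge2 {k N q : ℕ} (hk : 1 ≤ k) {i : ℕ} (hi : 2 ≤ i) :
    rset (wstar k N q) i = ∅ := by
  ext j; simp only [mem_rset, wstar, Finset.notMem_empty, iff_false]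
  split_ifs with h
  · rw [val1 hk]; omega
  · simp; omega

lemma zeros_wstar {k N q : ℕ} (hk : 1 ≤ k) (hq : q ≤ N) :
    (rset (wstar k N q) 0).card = q := by
  rw [rset_wstar_zero hk, cardGe N (N - q) (by omega)]; omega

lemma wstar_insertNth {k N q : ℕ} (s : Fin (N + 1)) (hs : (s : ℕ) < N + 1 - q) :
    s.insertNth 1 (wstar k N q) = wstar k (N + 1) q := by
  have hqN : q ≤ N := by omega
  funext j
  rcases eq_or_ne j s with rfl | hne
  · rw [Fin.insertNth_apply_same, wstar, if_pos hs]
  · obtain ⟨i₀, rfl⟩ := Fin.exists_succAbove_eq hne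
    rw [Fin.insertNth_apply_succAbove, wstar, wstar]
    have hv := succAbove_val s i₀
    have hiff : ((i₀ : ℕ) < N - q) ↔ (((s.succAbove i₀ : Fin (N + 1)) : ℕ) < N + 1 - q) := by
      rcases lt_or_ge ((i₀ : ℕ)) ((s : ℕ)) with h | h
      · rw [if_pos h] at hv; omega
      · rw [if_neg (by omega)] at hv; omega
    exact if_congr hiff rfl rfl


lemma rset_empty_of_big {k N : ℕ} (x : Fin N → Fin (k + 1)) {i : ℕ} (hi : k + 1 ≤ i) :
    rset x i = ∅ := by
  ext j; simp only [mem_rset, Finset.notMem_empty, iff_false]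
  have := (x j).is_lt; omega

lemma eq_of_rset_eq {k N : ℕ} (x y : Fin N → Fin (k + 1))
    (h : ∀ i : ℕ, 1 ≤ i → rset x i = rset y i) : x = y := by
  funext j
  rcases Nat.eq_zero_or_pos ((x j : ℕ)) with hx | hx
  · rcases Nat.eq_zero_or_pos ((y j : ℕ)) with hy | hy
    · exact Fin.val_injective (by omega)
    · have : j ∈ rset y ((y j : ℕ)) := mem_rset.mpr rfl
      rw [← h _ hy] at this
      have := mem_rset.mp this
      omega
  · have : j ∈ rset x ((x j : ℕ)) := mem_rset.mpr rfl
    rw [h _ hx] at this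
    exact Fin.val_injective (mem_rset.mp this).symm

lemma val_le_one {k N : ℕ} (x : Fin N → Fin (k + 1))
    (h : ∀ c : ℕ, 2 ≤ c → rset x c = ∅) (j : Fin N) : (x j : ℕ) ≤ 1 := by
  by_contra hc
  have : j ∈ rset x ((x j : ℕ)) := mem_rset.mpr rfl
  rw [h _ (by omega)] at this
  exact absurd this (Finset.notMem_empty j)

lemma card_rset_insertNth_zero {k N : ℕ} (s : Fin (N + 1)) (t : Fin (k + 1))
    (y : Fin N → Fin (k + 1)) :
    (rset (s.insertNth t y) 0).card = (rset y 0).card + (if (t : ℕ) = 0 then 1 else 0) := by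
  have he : rset (s.insertNth t y) 0
      = (rset y 0).map s.succAboveEmb ∪ (if (t : ℕ) = 0 then {s} else ∅) := by
    ext j
    rcases eq_or_ne j s with rfl | hne
    · simp only [mem_rset, Fin.insertNth_apply_same, Finset.mem_union, Finset.mem_map]
      constructor
      · intro h; rw [if_pos h]; right; exact Finset.mem_singleton_self j
      · rintro (⟨b, _, hb⟩ | h)
        · exact absurd hb (Fin.succAbove_ne j b)
        · split_ifs at h with ht
          · exact ht
          · exact absurd h (Finset.notMem_empty j)
    · obtain ⟨i₀, rfl⟩ := Fin.exists_succAbove_eq hne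
      simp only [mem_rset, Fin.insertNth_apply_succAbove, Finset.mem_union, Finset.mem_map,
        Fin.coe_succAboveEmb]
      constructor
      · intro h; left; exact ⟨i₀, h, rfl⟩
      · rintro (⟨b, hb, hbe⟩ | h)
        · have : b = i₀ := Fin.succAbove_right_injective (p := s) hbe
          subst this; exact hb
        · split_ifs at h with ht
          · exact absurd (Finset.mem_singleton.mp h) hne
          · exact absurd h (Finset.notMem_empty _)
  rw [he, Finset.card_union_of_disjoint, Finset.card_map]
  · congr 1
    split_ifs <;> simp
  · rw [Finset.disjoint_right]
    intro j hj
    split_ifs at hj with ht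
    · rw [Finset.mem_singleton.mp hj]
      intro hmem
      obtain ⟨b, _, hbe⟩ := Finset.mem_map.mp hmem
      exact Fin.succAbove_ne s b hbe
    · exact absurd hj (Finset.notMem_empty j)

lemma card_rset_removeNth {k N : ℕ} (s : Fin (N + 1)) (x : Fin (N + 1) → Fin (k + 1)) :
    (rset x 0).card
      = (rset (s.removeNth x) 0).card + (if (x s : ℕ) = 0 then 1 else 0) := by
  conv_lhs => rw [← Fin.insertNth_self_removeNth s x]
  exact card_rset_insertNth_zero s (x s) (s.removeNth x)


lemma zero_excess {k N q : ℕ} (hq : q ≤ N) (w : Fin N → Fin (k + 1))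
    (hw01 : ∀ j, (w j : ℕ) ≤ 1) (m : Fin N) (hm : (m : ℕ) < N - q) (hm0 : (w m : ℕ) = 0)
    (habove : ∀ j : Fin N, (m : ℕ) < (j : ℕ) → N - q ≤ (j : ℕ) → (w j : ℕ) ≠ 1) :
    q < (rset w 0).card := by
  have hsub : insert m (Finset.univ.filter fun j : Fin N => N - q ≤ (j : ℕ)) ⊆ rset w 0 := by
    intro j hj
    rcases Finset.mem_insert.mp hj with rfl | hj
    · exact mem_rset.mpr hm0
    · have hj2 := (Finset.mem_filter.mp hj).2
      have hne1 := habove j (by omega) hj2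
      have := hw01 j
      exact mem_rset.mpr (by omega)
  have hcard : (insert m (Finset.univ.filter fun j : Fin N => N - q ≤ (j : ℕ))).card
      = (N - (N - q)) + 1 := by
    rw [Finset.card_insert_of_notMem (by simp; omega), cardGe N (N - q) (by omega)]
  have := Finset.card_le_card hsub
  omega

lemma wstar_min {k N q : ℕ} (hk : 1 ≤ k) (hq : q ≤ N) (v : Fin N → Fin (k + 1))
    (hv : (rset v 0).card = q) : ple (wstar k N q) v := by
  by_cases hvw : wstar k N q = v
  · exact Or.inl hvw
  right
  refine Or.inr ⟨by rw [zeros_wstar hk hq, hv], ?_⟩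
  set I := (Finset.range (k + 1)).filter fun i => rset (wstar k N q) i ≠ rset v i with hI
  have hIne : I.Nonempty := by
    rw [Finset.nonempty_iff_ne_empty]
    intro hem
    refine hvw (eq_of_rset_eq _ _ fun i _ => ?_)
    by_cases hik : i < k + 1
    · by_contra hne
      have : i ∈ I := Finset.mem_filter.mpr ⟨Finset.mem_range.mpr hik, hne⟩
      rw [hem] at this
      exact absurd this (Finset.notMem_empty i)
    · rw [rset_empty_of_big _ (by omega), rset_empty_of_big _ (by omega)]
  set i := I.max' hIne with hidef
  have hiI := I.max'_mem hIne
  have hik : i < k + 1 := Finset.mem_range.mp (Finset.mem_filter.mp hiI).1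
  have hne : rset (wstar k N q) i ≠ rset v i := (Finset.mem_filter.mp hiI).2
  have hup : ∀ j : ℕ, i < j → rset (wstar k N q) j = rset v j := by
    intro j hj
    by_cases hjk : j < k + 1
    · by_contra hne2
      have : j ∈ I := Finset.mem_filter.mpr ⟨Finset.mem_range.mpr hjk, hne2⟩
      exact absurd (I.le_max' j this) (by omega)
    · rw [rset_empty_of_big _ (by omega), rset_empty_of_big _ (by omega)]
  refine ⟨i, ?_, hup⟩
  rcases Nat.lt_or_ge i 2 with h2 | h2
  · interval_cases i
    · -- i = 0 : impossible, v = wstar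
      exact absurd (eq_of_rset_eq _ _ fun j hj => hup j (by omega)) hvw
    · -- i = 1
      have h01 : ∀ j, (v j : ℕ) ≤ 1 := by
        refine val_le_one v (fun c hc => ?_)
        rw [← hup c (by omega)]
        exact rset_wstar_ge2 hk hc
      set D := Finset.univ.filter fun j : Fin N =>
        (j ∈ rset (wstar k N q) 1 ∧ j ∉ rset v 1) ∨ (j ∈ rset v 1 ∧ j ∉ rset (wstar k N q) 1)
        with hD
      have hDne : D.Nonempty := by
        rw [Finset.nonempty_iff_ne_empty]
        intro hem
        refine hne (Finset.ext fun j => ?_)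
        constructor
        · intro hj
          by_contra hj2
          have : j ∈ D := Finset.mem_filter.mpr ⟨Finset.mem_univ j, Or.inl ⟨hj, hj2⟩⟩
          rw [hem] at this; exact absurd this (Finset.notMem_empty j)
        · intro hj
          by_contra hj2
          have : j ∈ D := Finset.mem_filter.mpr ⟨Finset.mem_univ j, Or.inr ⟨hj, hj2⟩⟩
          rw [hem] at this; exact absurd this (Finset.notMem_empty j)
      set m := D.max' hDne with hm
      have hmD := D.max'_mem hDne
      rcases (Finset.mem_filter.mp hmD).2 with ⟨hmX, hmY⟩ | ⟨hmY, hmX⟩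
      · -- m ∈ X \ Y : contradiction by counting zeros of v
        exfalso
        have hmlt : (m : ℕ) < N - q := by
          have := (rset_wstar_one (N := N) (q := q) hk) ▸ hmX
          exact (Finset.mem_filter.mp this).2
        have hm0 : (v m : ℕ) = 0 := by
          have := h01 m
          have hne1 : (v m : ℕ) ≠ 1 := fun hc => hmY (mem_rset.mpr hc)
          omega
        have hlt : q < (rset v 0).card := by
          refine zero_excess hq v h01 m hmlt hm0 ?_
          intro j hj1 hj2 hc
          have hjY : j ∈ rset v 1 := mem_rset.mpr hc
          have hjX : j ∉ rset (wstar k N q) 1 := by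
            rw [rset_wstar_one hk]
            simp
            omega
          have : j ∈ D := Finset.mem_filter.mpr ⟨Finset.mem_univ j, Or.inr ⟨hjY, hjX⟩⟩
          have := D.le_max' j this
          rw [← hm] at this
          have := Fin.le_def.mp this
          omega
        omega
      · exact ⟨m, hmY, hmX, fun j hj =>
          D.le_max' j (Finset.mem_filter.mpr ⟨Finset.mem_univ j, hj⟩)⟩
  · -- i ≥ 2
    have hX : rset (wstar k N q) i = ∅ := rset_wstar_ge2 hk h2
    have hYne : (rset v i).Nonempty := by
      rw [Finset.nonempty_iff_ne_empty]
      intro hem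
      exact hne (by rw [hX, hem])
    refine ⟨(rset v i).max' hYne, (rset v i).max'_mem hYne, by simp [hX], fun j hj => ?_⟩
    rcases hj with ⟨hj1, _⟩ | ⟨hj1, _⟩
    · rw [hX] at hj1; exact absurd hj1 (Finset.notMem_empty j)
    · exact (rset v i).le_max' j hj1

lemma wstar_noplt {k N q : ℕ} (hk : 1 ≤ k) (hq : q ≤ N) (z : Fin N → Fin (k + 1))
    (h : plt z (wstar k N q)) : q < (rset z 0).card := by
  rcases h with h1 | ⟨hcard, i, hbin, hup⟩
  · rwa [zeros_wstar hk hq] at h1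
  rw [zeros_wstar hk hq] at hcard
  obtain ⟨m, hmY, hmX, hdom⟩ := hbin
  rcases Nat.lt_or_ge i 2 with h2 | h2
  · interval_cases i
    · -- i = 0 : z = wstar
      exfalso
      have : z = wstar k N q := eq_of_rset_eq _ _ fun j hj => hup j (by omega)
      rw [this] at hmX
      exact hmX hmY
    · -- i = 1
      have h01 : ∀ j, (z j : ℕ) ≤ 1 := by
        refine val_le_one z (fun c hc => ?_)
        rw [hup c (by omega)]
        exact rset_wstar_ge2 hk hc
      have hmlt : (m : ℕ) < N - q := by
        have := (rset_wstar_one (N := N) (q := q) hk) ▸ hmY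
        exact (Finset.mem_filter.mp this).2
      have hm0 : (z m : ℕ) = 0 := by
        have := h01 m
        have hne1 : (z m : ℕ) ≠ 1 := fun hc => hmX (mem_rset.mpr hc)
        omega
      refine zero_excess hq z h01 m hmlt hm0 ?_
      intro j hj1 hj2 hc
      have hjX : j ∈ rset z 1 := mem_rset.mpr hc
      have hjY : j ∉ rset (wstar k N q) 1 := by
        rw [rset_wstar_one hk]; simp; omega
      have := hdom j (Or.inl ⟨hjX, hjY⟩)
      have := Fin.le_def.mp this
      omega
  · rw [rset_wstar_ge2 hk h2] at hmY
    exact absurd hmY (Finset.notMem_empty m)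

lemma initSeg_closed {k N m : ℕ} (hk : 1 ≤ k) (u v : Fin N → Fin (k + 1))
    (hu : u ∈ initSeg k N m)
    (h : (rset u 0).card < (rset v 0).card ∨
      ((rset u 0).card ≤ N ∧ v = wstar k N ((rset u 0).card))) :
    v ∈ initSeg k N m := by
  simp only [initSeg, Finset.mem_filter, Finset.mem_univ, true_and] at hu ⊢
  refine le_trans (Finset.card_le_card ?_) hu
  intro z hz
  simp only [Finset.mem_filter, Finset.mem_univ, true_and] at hz ⊢
  rcases h with hlt | ⟨hqN, rfl⟩
  · rcases hz with rfl | hzlt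
    · exact Or.inr (Or.inl hlt)
    · have hle : (rset v 0).card ≤ (rset z 0).card := by
        rcases hzlt with h1 | ⟨h1, _⟩
        · omega
        · omega
      exact Or.inr (Or.inl (lt_of_lt_of_le hlt hle))
  · rcases hz with rfl | hzlt
    · exact wstar_min hk hqN u rfl
    · exact Or.inr (Or.inl (wstar_noplt hk hqN z hzlt))

lemma mem_compress_iff {k n : ℕ} (s : Fin (n + 1)) (A : Finset (Fin (n + 1) → Fin (k + 1)))
    (x : Fin (n + 1) → Fin (k + 1)) :
    x ∈ compress s A ↔ Fin.removeNth s x ∈ initSeg k n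
      (Finset.univ.filter fun y : Fin n → Fin (k + 1) => s.insertNth (x s) y ∈ A).card := by
  simp only [compress, Finset.mem_biUnion, Finset.mem_image, Finset.mem_univ, true_and]
  constructor
  · rintro ⟨t, y, hy, rfl⟩
    rwa [Fin.insertNth_apply_same, Fin.removeNth_insertNth]
  · intro h
    exact ⟨x s, Fin.removeNth s x, h, Fin.insertNth_self_removeNth s x⟩

lemma transfer {k n : ℕ} (hk : 1 ≤ k) {A : Finset (Fin (n + 1) → Fin (k + 1))}
    (hA : IsCompressed A) {u v : Fin (n + 1) → Fin (k + 1)} (hu : u ∈ A) (s : Fin (n + 1))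
    (hsv : v s = u s)
    (h : (rset (Fin.removeNth s u) 0).card < (rset (Fin.removeNth s v) 0).card ∨
      ((rset (Fin.removeNth s u) 0).card ≤ n ∧
        Fin.removeNth s v = wstar k n ((rset (Fin.removeNth s u) 0).card))) :
    v ∈ A := by
  rw [← hA s] at hu ⊢
  rw [mem_compress_iff] at hu ⊢
  rw [hsv]
  exact initSeg_closed hk _ _ hu h

/-- **Claim 5, first part.** Let `k ≥ 2`, `n ≥ 2`, let `A ⊆ [k]^n` be a nonempty
compressed set and let `p` be the minimal index with `A ∩ B_p ≠ ∅`. Then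
`d(B_{≥ p+1}) ⊆ d(A)`. (Dimension `n ≥ 2` is rendered as `n + 1` with `n ≥ 1`;
alphabet `[k]` with `k ≥ 2` as `Fin (k+1)` with `k ≥ 1`.) -/
theorem claim5_first (k n : ℕ) (hk : 1 ≤ k) (hn : 1 ≤ n)
    (A : Finset (Fin (n + 1) → Fin (k + 1))) (hA : IsCompressed A) (hAne : A.Nonempty)
    (p : ℕ) (hp : (A ∩ Bexact k (n + 1) p).Nonempty)
    (hpmin : ∀ q < p, A ∩ Bexact k (n + 1) q = ∅) :
    dShadow (Bge k (n + 1) (p + 1)) ⊆ dShadow A := by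
  intro z hz
  simp only [dShadow, Bge, Finset.mem_biUnion, Finset.mem_image, Finset.mem_filter,
    Finset.mem_univ, true_and] at hz
  obtain ⟨y, hyB, i0, hi0ne, hi0eq⟩ := hz
  subst hi0eq
  set z := Function.update y i0 0 with hzd
  have hi0mem : i0 ∉ rset y 0 := fun hc => hi0ne (Fin.val_injective (mem_rset.mp hc))
  have hzy : rset z 0 = insert i0 (rset y 0) := by
    ext j
    rcases eq_or_ne j i0 with rfl | hne
    · simp [mem_rset, hzd, Function.update_self]
    · simp only [mem_rset, hzd, Function.update_of_ne hne, Finset.mem_insert]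
      simp [hne]
  have hm : (rset z 0).card = (rset y 0).card + 1 := by
    rw [hzy, Finset.card_insert_of_notMem hi0mem]
  set m := (rset z 0).card with hmd
  have hm1 : p + 2 ≤ m := by omega
  have hm2 : m ≤ n + 1 := by
    have := Finset.card_le_univ (rset z 0)
    simpa using this
  have hpn : p + 2 ≤ n + 1 := le_trans hm1 hm2
  -- the element a with exactly p zeros
  obtain ⟨a, haA⟩ := hp
  have haA' : a ∈ A := (Finset.mem_inter.mp haA).1
  have haB : (rset a 0).card = p := by
    have := (Finset.mem_inter.mp haA).2
    simpa [Bexact] using this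
  -- a nonzero coordinate of a
  have hex : ∃ j : Fin (n + 1), j ∉ rset a 0 := by
    by_contra hc
    push_neg at hc
    have : (Finset.univ : Finset (Fin (n + 1))) ⊆ rset a 0 := fun j _ => hc j
    have := Finset.card_le_card this
    simp [haB] at this
    omega
  obtain ⟨j, hj⟩ := hex
  have hja : (a j : ℕ) ≠ 0 := fun hc => hj (mem_rset.mpr hc)
  have hra : (rset (Fin.removeNth j a) 0).card = p := by
    have := card_rset_removeNth j a
    rw [if_neg hja] at this
    omega
  -- step 1a
  set v1 : Fin (n + 1) → Fin (k + 1) := j.insertNth (a j) (wstar k n p) with hv1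
  have hv1A : v1 ∈ A := by
    refine transfer hk hA haA' j (by rw [hv1, Fin.insertNth_apply_same]) (Or.inr ⟨?_, ?_⟩)
    · omega
    · rw [hv1, Fin.removeNth_insertNth, hra]
  have hv1z : (rset v1 0).card = p := by
    rw [hv1, card_rset_insertNth_zero, if_neg hja, zeros_wstar hk (by omega)]
    omega
  -- the auxiliary coordinate j'
  set j' : Fin (n + 1) := if (j : ℕ) = 0 then ⟨1, by omega⟩ else ⟨0, by omega⟩ with hj'
  have hj'v : (j' : ℕ) = if (j : ℕ) = 0 then 1 else 0 := by
    rw [hj']; split_ifs <;> rfl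
  have hj'ne : j' ≠ j := by
    intro hc
    have := congrArg Fin.val hc
    rw [hj'v] at this
    split_ifs at this <;> omega
  obtain ⟨i₀, hi₀⟩ := Fin.exists_succAbove_eq hj'ne
  have hi₀0 : (i₀ : ℕ) = 0 := by
    have hv := succAbove_val j i₀
    rw [hi₀] at hv
    rcases Nat.eq_zero_or_pos ((j : ℕ)) with hj0 | hj0
    · have hj'1 : (j' : ℕ) = 1 := by rw [hj'v, if_pos hj0]
      rw [if_neg (by omega)] at hv
      omega
    · have hj'0 : (j' : ℕ) = 0 := by rw [hj'v, if_neg (by omega)]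
      rcases lt_or_ge ((i₀ : ℕ)) ((j : ℕ)) with h | h
      · rw [if_pos h] at hv; omega
      · rw [if_neg (by omega)] at hv; omega
  have hv1j' : v1 j' = 1 := by
    rw [hv1, ← hi₀, Fin.insertNth_apply_succAbove, wstar, if_pos (by omega : (i₀ : ℕ) < n - p)]
  -- step 1b
  have hrv1 : (rset (Fin.removeNth j' v1) 0).card = p := by
    have h := card_rset_removeNth j' v1
    rw [hv1j', val1 hk, if_neg (by omega)] at h
    omega
  set w1 : Fin (n + 1) → Fin (k + 1) := j'.insertNth 1 (wstar k n p) with hw1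
  have hw1A : w1 ∈ A := by
    refine transfer hk hA hv1A j' (by rw [hw1, Fin.insertNth_apply_same, hv1j']) (Or.inr ⟨?_, ?_⟩)
    · omega
    · rw [hw1, Fin.removeNth_insertNth, hrv1]
  -- step 1c
  set q := m - 2 with hqdef
  have hq1 : p ≤ q := by omega
  have hq2 : q ≤ n - 1 := by omega
  set w2 : Fin (n + 1) → Fin (k + 1) := j'.insertNth 1 (wstar k n q) with hw2df
  have hw2A : w2 ∈ A := by
    rcases eq_or_lt_of_le hq1 with heq | hlt
    · rw [hw2df, ← heq]; exact hw1A
    · refine transfer hk hA hw1A j'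
        (by rw [hw2df, hw1, Fin.insertNth_apply_same, Fin.insertNth_apply_same]) (Or.inl ?_)
      rw [hw2df, hw1, Fin.removeNth_insertNth, Fin.removeNth_insertNth,
        zeros_wstar hk (by omega), zeros_wstar hk (by omega)]
      exact hlt
  have hw2eq : w2 = wstar k (n + 1) q := by
    rw [hw2df]
    refine wstar_insertNth j' ?_
    have : (j' : ℕ) ≤ 1 := by rw [hj'v]; split_ifs <;> omega
    omega
  -- the minimal zero coordinate of z
  have hzne : (rset z 0).Nonempty := Finset.card_pos.mp (by omega)
  set i := (rset z 0).min' hzne with hidf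
  have himem : i ∈ rset z 0 := (rset z 0).min'_mem hzne
  have hzi : (z i : ℕ) = 0 := mem_rset.mp himem
  have hile : (i : ℕ) + m ≤ n + 1 := by
    have hsub : rset z 0 ⊆ Finset.univ.filter fun x : Fin (n + 1) => (i : ℕ) ≤ (x : ℕ) := by
      intro x hx
      simp only [Finset.mem_filter, Finset.mem_univ, true_and]
      exact Fin.le_def.mp ((rset z 0).min'_le x hx)
    have hcc := Finset.card_le_card hsub
    rw [cardGe (n + 1) ((i : ℕ)) (by omega)] at hcc
    omega
  have hiw : ((wstar k (n + 1) q i : Fin (k + 1)) : ℕ) = 1 := by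
    rw [wstar, if_pos (by omega : (i : ℕ) < n + 1 - q)]
    exact val1 hk
  -- step 2
  set v := Function.update z i 1 with hvd
  have hvA : v ∈ A := by
    refine transfer hk hA (hw2eq ▸ hw2A) i ?_ (Or.inl ?_)
    · rw [hvd]
      rw [Function.update_self]
      exact Fin.val_injective (by rw [hiw, val1 hk])
    · have h1 : (rset (Fin.removeNth i (wstar k (n + 1) q)) 0).card = q := by
        have h := card_rset_removeNth i (wstar k (n + 1) q)
        rw [zeros_wstar hk (by omega), hiw, if_neg (by omega)] at h
        omega
      have h2 : (rset (Fin.removeNth i v) 0).card = m - 1 := by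
        have hrv : Fin.removeNth i v = Fin.removeNth i z := by
          funext x
          show v (i.succAbove x) = z (i.succAbove x)
          rw [hvd, Function.update_of_ne (Fin.succAbove_ne i x)]
        rw [hrv]
        have h := card_rset_removeNth i z
        rw [if_pos hzi] at h
        omega
      rw [h1, h2]
      omega
  -- conclusion
  simp only [dShadow, Finset.mem_biUnion, Finset.mem_image, Finset.mem_filter,
    Finset.mem_univ, true_and]
  refine ⟨v, hvA, i, ?_, ?_⟩
  · rw [hvd, Function.update_self]
    intro hc
    have := congrArg Fin.val hc
    rw [val1 hk] at this
    simp at this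
  · funext x
    rcases eq_or_ne x i with rfl | hne
    · rw [Function.update_self]
      exact Fin.val_injective (by simp [hzi])
    · rw [Function.update_of_ne hne, hvd, Function.update_of_ne hne]
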